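/- The squared maximum mean discrepancy of a translation-invariant kernel is the weighted L²(Λ) distance between characteristic functions: ∫∫ k d(P ⊗ P) + ∫∫ k d(Q ⊗ Q) − ∫∫ k d(P ⊗ Q) − ∫∫ k d(Q ⊗ P) = ∫ |φ_P(ω) − φ_Q(ω)|² dΛ(ω). -/

import Mathlib

open MeasureTheory
open scoped RealInnerProductSpace

variable {d : ℕ}

private lemma norm_exp_I_real (r : ℝ) : ‖Complex.exp (Complex.I * (r : ℂ))‖ = 1 := by
  rw [Complex.norm_exp]
  simp

private lemma key (Λ μ ν : Measure (EuclideanSpace ℝ (Fin d))) [IsFiniteMeasure Λ]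
    [IsProbabilityMeasure μ] [IsProbabilityMeasure ν] :
    ∫ p, (∫ ω, Complex.exp (Complex.I * (⟪ω, p.1 - p.2⟫ : ℂ)) ∂Λ) ∂(μ.prod ν)
      = ∫ ω, (∫ x, Complex.exp (Complex.I * (⟪ω, x⟫ : ℂ)) ∂μ)
          * (starRingEnd ℂ) (∫ y, Complex.exp (Complex.I * (⟪ω, y⟫ : ℂ)) ∂ν) ∂Λ := by
  have hcont : Continuous (Function.uncurry fun (p : EuclideanSpace ℝ (Fin d) × EuclideanSpace ℝ (Fin d)) (ω : EuclideanSpace ℝ (Fin d)) =>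
      Complex.exp (Complex.I * (⟪ω, p.1 - p.2⟫ : ℂ))) :=
    Complex.continuous_exp.comp (continuous_const.mul (Complex.continuous_ofReal.comp
      (Continuous.inner continuous_snd (continuous_fst.fst.sub continuous_fst.snd))))
  have hint : Integrable (Function.uncurry fun (p : EuclideanSpace ℝ (Fin d) × EuclideanSpace ℝ (Fin d)) (ω : EuclideanSpace ℝ (Fin d)) =>
      Complex.exp (Complex.I * (⟪ω, p.1 - p.2⟫ : ℂ))) ((μ.prod ν).prod Λ) := by
    apply (integrable_const (1 : ℝ)).mono' hcont.aestronglyMeasurable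
    filter_upwards with q
    simp only [Function.uncurry]
    exact le_of_eq (norm_exp_I_real _)
  rw [integral_integral_swap hint]
  refine integral_congr_ae (Filter.Eventually.of_forall fun ω => ?_)
  have h1 : ∀ (x y : EuclideanSpace ℝ (Fin d)),
      Complex.exp (Complex.I * (⟪ω, x - y⟫ : ℂ))
        = Complex.exp (Complex.I * (⟪ω, x⟫ : ℂ))
          * (starRingEnd ℂ) (Complex.exp (Complex.I * (⟪ω, y⟫ : ℂ))) := by
    intro x y
    rw [inner_sub_right, ← Complex.exp_conj]
    push_cast
    rw [← Complex.exp_add]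
    congr 1
    simp
    ring
  calc ∫ p, Complex.exp (Complex.I * (⟪ω, p.1 - p.2⟫ : ℂ)) ∂(μ.prod ν)
      = ∫ p : _ × _, Complex.exp (Complex.I * (⟪ω, p.1⟫ : ℂ))
          * (starRingEnd ℂ) (Complex.exp (Complex.I * (⟪ω, p.2⟫ : ℂ))) ∂(μ.prod ν) := by
        simp_rw [h1]
    _ = (∫ x, Complex.exp (Complex.I * (⟪ω, x⟫ : ℂ)) ∂μ)
          * ∫ y, (starRingEnd ℂ) (Complex.exp (Complex.I * (⟪ω, y⟫ : ℂ))) ∂ν :=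
        integral_prod_mul (fun x => Complex.exp (Complex.I * (⟪ω, x⟫ : ℂ)))
          (fun y => (starRingEnd ℂ) (Complex.exp (Complex.I * (⟪ω, y⟫ : ℂ))))
    _ = _ := by rw [integral_conj]

private lemma charFun_sm (μ : Measure (EuclideanSpace ℝ (Fin d))) [IsProbabilityMeasure μ]
    (ch : EuclideanSpace ℝ (Fin d) → ℂ)
    (hch : ∀ ω, ch ω = ∫ x, Complex.exp (Complex.I * (⟪ω, x⟫ : ℂ)) ∂μ) :
    StronglyMeasurable ch := by
  have : ch = fun ω => ∫ x, Complex.exp (Complex.I * (⟪ω, x⟫ : ℂ)) ∂μ := funext hch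
  rw [this]
  apply StronglyMeasurable.integral_prod_right
  exact (Complex.continuous_exp.comp (continuous_const.mul (Complex.continuous_ofReal.comp
    (Continuous.inner continuous_fst continuous_snd)))).stronglyMeasurable

private lemma charFun_bd (μ : Measure (EuclideanSpace ℝ (Fin d))) [IsProbabilityMeasure μ]
    (ch : EuclideanSpace ℝ (Fin d) → ℂ)
    (hch : ∀ ω, ch ω = ∫ x, Complex.exp (Complex.I * (⟪ω, x⟫ : ℂ)) ∂μ) (ω) :
    ‖ch ω‖ ≤ 1 := by
  rw [hch]
  have := norm_integral_le_of_norm_le_const (μ := μ) (C := 1)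
    (f := fun x => Complex.exp (Complex.I * (⟪ω, x⟫ : ℂ)))
    (Filter.Eventually.of_forall fun x => le_of_eq (norm_exp_I_real _))
  simpa using this

/-- **Squared MMD of a translation-invariant kernel as a weighted `L²(Λ)` distance
between characteristic functions:**
`∫∫ k d(P⊗P) + ∫∫ k d(Q⊗Q) − ∫∫ k d(P⊗Q) − ∫∫ k d(Q⊗P) = ∫ |φ_P(ω) − φ_Q(ω)|² dΛ(ω)`. -/
theorem sq_mmd_eq_weighted_L2_dist_charFun
    {d : ℕ}
    (Λ : Measure (EuclideanSpace ℝ (Fin d))) [IsFiniteMeasure Λ]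
    (P Q : Measure (EuclideanSpace ℝ (Fin d)))
    [IsProbabilityMeasure P] [IsProbabilityMeasure Q]
    (k : EuclideanSpace ℝ (Fin d) → EuclideanSpace ℝ (Fin d) → ℂ)
    (hk : ∀ x y, k x y = ∫ ω, Complex.exp (Complex.I * (⟪ω, x - y⟫ : ℂ)) ∂Λ)
    (chP chQ : EuclideanSpace ℝ (Fin d) → ℂ)
    (hchP : ∀ ω, chP ω = ∫ x, Complex.exp (Complex.I * (⟪ω, x⟫ : ℂ)) ∂P)
    (hchQ : ∀ ω, chQ ω = ∫ y, Complex.exp (Complex.I * (⟪ω, y⟫ : ℂ)) ∂Q) :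
    (∫ p, k p.1 p.2 ∂(P.prod P)) + (∫ p, k p.1 p.2 ∂(Q.prod Q))
        - (∫ p, k p.1 p.2 ∂(P.prod Q)) - (∫ p, k p.1 p.2 ∂(Q.prod P))
      = ((∫ ω, ‖chP ω - chQ ω‖ ^ 2 ∂Λ : ℝ) : ℂ) := by
  have hkk : ∀ (μ ν : Measure (EuclideanSpace ℝ (Fin d))), ∀ (_ : IsProbabilityMeasure μ)
      (_ : IsProbabilityMeasure ν) (chμ chν : EuclideanSpace ℝ (Fin d) → ℂ),
      (∀ ω, chμ ω = ∫ x, Complex.exp (Complex.I * (⟪ω, x⟫ : ℂ)) ∂μ) →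
      (∀ ω, chν ω = ∫ y, Complex.exp (Complex.I * (⟪ω, y⟫ : ℂ)) ∂ν) →
      ∫ p, k p.1 p.2 ∂(μ.prod ν) = ∫ ω, chμ ω * (starRingEnd ℂ) (chν ω) ∂Λ := by
    intro μ ν hμ hν chμ chν hμ' hν'
    simp_rw [hk, hμ', hν']
    exact key Λ μ ν
  rw [hkk P P ‹_› ‹_› chP chP hchP hchP, hkk Q Q ‹_› ‹_› chQ chQ hchQ hchQ,
    hkk P Q ‹_› ‹_› chP chQ hchP hchQ, hkk Q P ‹_› ‹_› chQ chP hchQ hchP,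
    show ((∫ ω, ‖chP ω - chQ ω‖ ^ 2 ∂Λ : ℝ) : ℂ) = ∫ ω, ((‖chP ω - chQ ω‖ ^ 2 : ℝ) : ℂ) ∂Λ
      from (integral_ofReal).symm]
  have hexp : ∀ ω, ((‖chP ω - chQ ω‖ ^ 2 : ℝ) : ℂ)
      = chP ω * (starRingEnd ℂ) (chP ω) + chQ ω * (starRingEnd ℂ) (chQ ω)
        - chP ω * (starRingEnd ℂ) (chQ ω) - chQ ω * (starRingEnd ℂ) (chP ω) := by
    intro ω
    have h : ∀ z : ℂ, ((‖z‖ ^ 2 : ℝ) : ℂ) = z * (starRingEnd ℂ) z := fun z => by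
      rw [Complex.mul_conj]
      norm_cast
      rw [Complex.normSq_eq_norm_sq]
    rw [h]
    rw [map_sub]
    ring
  have hI : ∀ (g h : EuclideanSpace ℝ (Fin d) → ℂ), StronglyMeasurable g →
      StronglyMeasurable h → (∀ ω, ‖g ω‖ ≤ 1) → (∀ ω, ‖h ω‖ ≤ 1) →
      Integrable (fun ω => g ω * (starRingEnd ℂ) (h ω)) Λ := by
    intro g h hg hh hgb hhb
    apply (integrable_const (1 : ℝ)).mono'
      (hg.mul (continuous_star.comp_stronglyMeasurable hh)).aestronglyMeasurable
    filter_upwards with ω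
    calc ‖g ω * (starRingEnd ℂ) (h ω)‖ = ‖g ω‖ * ‖h ω‖ := by
          rw [norm_mul]; simp
      _ ≤ 1 * 1 := mul_le_mul (hgb ω) (hhb ω) (norm_nonneg _) zero_le_one
      _ = 1 := one_mul 1
  have hsP := charFun_sm P chP hchP
  have hsQ := charFun_sm Q chQ hchQ
  have hbP := charFun_bd P chP hchP
  have hbQ := charFun_bd Q chQ hchQ
  have iPP := hI chP chP hsP hsP hbP hbP
  have iQQ := hI chQ chQ hsQ hsQ hbQ hbQ
  have iPQ := hI chP chQ hsP hsQ hbP hbQ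
  have iQP := hI chQ chP hsQ hsP hbQ hbP
  rw [show (fun ω => ((‖chP ω - chQ ω‖ ^ 2 : ℝ) : ℂ))
      = fun ω => chP ω * (starRingEnd ℂ) (chP ω) + chQ ω * (starRingEnd ℂ) (chQ ω)
        - chP ω * (starRingEnd ℂ) (chQ ω) - chQ ω * (starRingEnd ℂ) (chP ω) from funext hexp]
  have iA : Integrable (fun ω => chP ω * (starRingEnd ℂ) (chP ω)
      + chQ ω * (starRingEnd ℂ) (chQ ω)) Λ := iPP.add iQQ
  have iB : Integrable (fun ω => chP ω * (starRingEnd ℂ) (chP ω)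
      + chQ ω * (starRingEnd ℂ) (chQ ω) - chP ω * (starRingEnd ℂ) (chQ ω)) Λ := iA.sub iPQ
  rw [integral_sub iB iQP, integral_sub iA iPQ, integral_add iPP iQQ]
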